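/- Let n ≥ 2, let k be an integer with 2 ≤ k ≤ n, and let p = (p_1,…,p_n) ∈ [0,1]^n with 0 ≤ p_1 ≤ p_2 ≤ … ≤ p_n ≤ 1. Then for every pairwise independent distribution θ with marginal vector p: (i) for every integer r_1 with 0 ≤ r_1 ≤ k−1, P_θ(∑_{i=1}^n c_i ≥ k) ≤ S_{1r_1}/(k−r_1); and (ii) for every integer r_2 with 0 ≤ r_2 ≤ k−2, P_θ(∑_{i=1}^n c_i ≥ k) ≤ S_{2r_2} / C(k−r_2, 2), where C(m,2) = m(m−1)/2. -/

import Mathlib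

open Finset

noncomputable section

/-- Probability that at least `k` of the `n` coordinates equal `1` under the pmf `θ` on `{0,1}^n`. -/
def probGE (n : ℕ) (θ : (Fin n → Bool) → ℝ) (k : ℕ) : ℝ :=
  ∑ c ∈ Finset.univ.filter
      (fun c : Fin n → Bool => k ≤ (Finset.univ.filter (fun i => c i = true)).card), θ c

/-- Probability that all `n` coordinates equal `1` under the pmf `θ` on `{0,1}^n`. -/
def probAll (n : ℕ) (θ : (Fin n → Bool) → ℝ) : ℝ :=
  ∑ c ∈ Finset.univ.filter (fun c : Fin n → Bool => ∀ i, c i = true), θ c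

/-- `θ` is a probability mass function on `{0,1}^n`. -/
def IsDist (n : ℕ) (θ : (Fin n → Bool) → ℝ) : Prop :=
  (∀ c, 0 ≤ θ c) ∧ (∑ c, θ c = 1)

/-- Univariate marginal probability `P_θ(c_i = 1)`. -/
def Marg (n : ℕ) (θ : (Fin n → Bool) → ℝ) (i : Fin n) : ℝ :=
  ∑ c ∈ Finset.univ.filter (fun c : Fin n → Bool => c i = true), θ c

/-- Bivariate probability `P_θ(c_i = 1, c_j = 1)`. -/
def Biv (n : ℕ) (θ : (Fin n → Bool) → ℝ) (i j : Fin n) : ℝ :=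
  ∑ c ∈ Finset.univ.filter (fun c : Fin n → Bool => c i = true ∧ c j = true), θ c

/-- `θ` is a pairwise independent distribution with marginal vector `p`. -/
def PairwiseIndep (n : ℕ) (p : Fin n → ℝ) (θ : (Fin n → Bool) → ℝ) : Prop :=
  IsDist n θ ∧ (∀ i, Marg n θ i = p i) ∧
    (∀ i j : Fin n, i < j → Biv n θ i j = p i * p j)

lemma pair_count {α : Type*} [DecidableEq α] [LinearOrder α] (B : Finset α) :
    ∑ i ∈ B, (B.filter (fun j => i < j)).card = B.card.choose 2 := by
  induction B using Finset.induction_on_max with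
  | empty => simp
  | insert a B ha ih =>
    have haB : a ∉ B := fun h => lt_irrefl a (ha a h)
    rw [Finset.sum_insert haB]
    have h1 : (insert a B).filter (fun j => a < j) = ∅ := by
      rw [Finset.filter_eq_empty_iff]
      intro x hx
      rcases Finset.mem_insert.mp hx with h | h
      · simp [h]
      · exact lt_asymm (ha x h)
    have h2 : ∀ i ∈ B, ((insert a B).filter (fun j => i < j)).card
        = (B.filter (fun j => i < j)).card + 1 := by
      intro i hi
      rw [Finset.filter_insert, if_pos (ha i hi), Finset.card_insert_of_notMem]
      simp [haB]
    rw [h1, Finset.sum_congr rfl h2, Finset.sum_add_distrib, ih,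
      Finset.card_insert_of_notMem haB]
    simp [Nat.choose]
    omega

lemma card_fin_lt (n m : ℕ) (h : m ≤ n) :
    (Finset.univ.filter (fun i : Fin n => (i : ℕ) < m)).card = m := by
  have : (Finset.univ.filter (fun i : Fin n => (i : ℕ) < m)).card = (Finset.range m).card := by
    refine Finset.card_bij (fun i _ => (i : ℕ)) ?_ ?_ ?_
    · intro a ha; simp at ha ⊢; exact ha
    · intro a ha b hb hab; exact Fin.val_injective hab
    · intro b hb; simp at hb; exact ⟨⟨b, lt_of_lt_of_le hb h⟩, by simp [hb], rfl⟩
  simpa using this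

lemma card_fin_ge (n m : ℕ) (h : m ≤ n) :
    (Finset.univ.filter (fun i : Fin n => ¬ (i : ℕ) < m)).card = n - m := by
  have h2 := Finset.card_filter_add_card_filter_not
    (s := (Finset.univ : Finset (Fin n))) (p := fun i : Fin n => (i : ℕ) < m)
  rw [card_fin_lt n m h, Finset.card_univ, Fintype.card_fin] at h2
  omega

lemma marg_count (n : ℕ) (θ : (Fin n → Bool) → ℝ) (A : Finset (Fin n)) :
    ∑ i ∈ A, Marg n θ i
    = ∑ c : Fin n → Bool, ((A.filter (fun i => c i = true)).card : ℝ) * θ c := by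
  simp_rw [Marg, Finset.sum_filter]
  rw [Finset.sum_comm]
  refine Finset.sum_congr rfl fun c _ => ?_
  rw [← Finset.sum_filter, Finset.sum_const, nsmul_eq_mul]

lemma biv_count (n : ℕ) (θ : (Fin n → Bool) → ℝ) (A : Finset (Fin n)) :
    ∑ i ∈ A, ∑ j ∈ A.filter (fun j => i < j), Biv n θ i j
    = ∑ c : Fin n → Bool, ((A.filter (fun i => c i = true)).card.choose 2 : ℝ) * θ c := by
  simp_rw [Biv, Finset.sum_filter (s := (Finset.univ : Finset (Fin n → Bool)))]
  rw [Finset.sum_congr rfl (fun i _ => Finset.sum_comm), Finset.sum_comm]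
  refine Finset.sum_congr rfl fun c _ => ?_
  set B := A.filter (fun i => c i = true) with hB
  have inner : ∀ i ∈ A, (∑ j ∈ A.filter (fun j => i < j),
      (if c i = true ∧ c j = true then θ c else 0))
      = if c i = true then ((B.filter (fun j => i < j)).card : ℝ) * θ c else 0 := by
    intro i _
    by_cases hci : c i = true
    · simp only [hci, true_and, if_true]
      rw [← Finset.sum_filter]
      have he : (A.filter (fun j => i < j)).filter (fun j => c j = true)
          = B.filter (fun j => i < j) := by
        ext x
        simp only [hB, Finset.mem_filter]
        tauto
      rw [he, Finset.sum_const, nsmul_eq_mul]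
    · simp [hci]
  rw [Finset.sum_congr rfl inner, ← Finset.sum_filter, ← hB, ← Finset.sum_mul,
    ← Nat.cast_sum, pair_count]

theorem stmt_7 (n k : ℕ) (hn : 2 ≤ n) (hk2 : 2 ≤ k) (hkn : k ≤ n) (p : Fin n → ℝ)
    (hp0 : ∀ i, 0 ≤ p i) (hp1 : ∀ i, p i ≤ 1) (hmono : Monotone p)
    (S1 S2 : ℕ → ℝ)
    (hS1 : ∀ r, S1 r = ∑ i ∈ Finset.univ.filter (fun i : Fin n => (i : ℕ) < n - r), p i)
    (hS2 : ∀ r, S2 r = ∑ i ∈ Finset.univ.filter (fun i : Fin n => (i : ℕ) < n - r),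
      ∑ j ∈ Finset.univ.filter (fun j : Fin n => i < j ∧ (j : ℕ) < n - r), p i * p j)
    (θ : (Fin n → Bool) → ℝ) (hθ : PairwiseIndep n p θ) :
    (∀ r1 : ℕ, r1 ≤ k - 1 →
      probGE n θ k ≤ S1 r1 / ((k : ℝ) - r1)) ∧
    (∀ r2 : ℕ, r2 ≤ k - 2 →
      probGE n θ k ≤ S2 r2 / (((k : ℝ) - r2) * ((k : ℝ) - r2 - 1) / 2)) := by
  obtain ⟨⟨hθ0, hθsum⟩, hmarg, hbiv⟩ := hθ
  -- key cardinality bound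
  have hkey : ∀ (r : ℕ), r ≤ n → ∀ c : Fin n → Bool,
      k ≤ (Finset.univ.filter (fun i => c i = true)).card →
      k - r ≤ ((Finset.univ.filter (fun i : Fin n => (i : ℕ) < n - r)).filter
        (fun i => c i = true)).card := by
    intro r hr c hc
    have hsplit := Finset.card_filter_add_card_filter_not
      (s := Finset.univ.filter (fun i : Fin n => c i = true))
      (p := fun i : Fin n => (i : ℕ) < n - r)
    have hle : ((Finset.univ.filter (fun i : Fin n => c i = true)).filter
        (fun i : Fin n => ¬ (i : ℕ) < n - r)).card
        ≤ (Finset.univ.filter (fun i : Fin n => ¬ (i : ℕ) < n - r)).card :=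
      Finset.card_le_card (Finset.filter_subset_filter _ (Finset.filter_subset _ _))
    rw [card_fin_ge n (n - r) (Nat.sub_le n r)] at hle
    have heq : ((Finset.univ.filter (fun i : Fin n => c i = true)).filter
        (fun i : Fin n => (i : ℕ) < n - r)).card
        = ((Finset.univ.filter (fun i : Fin n => (i : ℕ) < n - r)).filter
        (fun i => c i = true)).card := by
      congr 1
      ext x
      simp only [Finset.mem_filter]
      tauto
    omega
  have hprobGE : probGE n θ k = ∑ c ∈ Finset.univ.filter
      (fun c : Fin n → Bool => k ≤ (Finset.univ.filter (fun i => c i = true)).card), θ c := rfl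
  constructor
  · intro r1 hr1
    have hr1k : r1 < k := by omega
    set A := Finset.univ.filter (fun i : Fin n => (i : ℕ) < n - r1) with hA
    have key1 : S1 r1 = ∑ c : Fin n → Bool,
        ((A.filter (fun i => c i = true)).card : ℝ) * θ c := by
      rw [hS1, ← marg_count]
      exact Finset.sum_congr rfl fun i _ => (hmarg i).symm
    have key2 : ((k - r1 : ℕ) : ℝ) * probGE n θ k ≤ S1 r1 := by
      rw [key1, hprobGE, Finset.mul_sum]
      calc ∑ c ∈ Finset.univ.filter
            (fun c : Fin n → Bool => k ≤ (Finset.univ.filter (fun i => c i = true)).card),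
            ((k - r1 : ℕ) : ℝ) * θ c
          ≤ ∑ c ∈ Finset.univ.filter
            (fun c : Fin n → Bool => k ≤ (Finset.univ.filter (fun i => c i = true)).card),
            ((A.filter (fun i => c i = true)).card : ℝ) * θ c := by
            refine Finset.sum_le_sum fun c hc => ?_
            refine mul_le_mul_of_nonneg_right ?_ (hθ0 c)
            exact_mod_cast hkey r1 (by omega) c (Finset.mem_filter.mp hc).2
        _ ≤ ∑ c : Fin n → Bool, ((A.filter (fun i => c i = true)).card : ℝ) * θ c := by
            refine Finset.sum_le_sum_of_subset_of_nonneg (Finset.filter_subset _ _)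
              fun c _ _ => ?_
            exact mul_nonneg (by positivity) (hθ0 c)
    have hc : (0 : ℝ) < (k : ℝ) - r1 := by
      have : (r1 : ℝ) < k := by exact_mod_cast hr1k
      linarith
    rw [le_div_iff₀ hc]
    have : ((k - r1 : ℕ) : ℝ) = (k : ℝ) - r1 := by
      rw [Nat.cast_sub hr1k.le]
    rw [mul_comm, ← this]
    exact key2
  · intro r2 hr2
    have hr2k : r2 + 2 ≤ k := by omega
    set A := Finset.univ.filter (fun i : Fin n => (i : ℕ) < n - r2) with hA
    have hinner : ∀ i : Fin n,
        Finset.univ.filter (fun j : Fin n => i < j ∧ (j : ℕ) < n - r2)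
        = A.filter (fun j => i < j) := by
      intro i
      ext x
      simp only [hA, Finset.mem_filter, Finset.mem_univ, true_and]
      tauto
    have key1 : S2 r2 = ∑ c : Fin n → Bool,
        (((A.filter (fun i => c i = true)).card.choose 2 : ℕ) : ℝ) * θ c := by
      rw [hS2, ← biv_count]
      refine Finset.sum_congr rfl fun i _ => ?_
      rw [hinner i]
      refine Finset.sum_congr rfl fun j hj => ?_
      exact (hbiv i j (Finset.mem_filter.mp hj).2).symm
    have key2 : (((k - r2 : ℕ).choose 2 : ℕ) : ℝ) * probGE n θ k ≤ S2 r2 := by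
      rw [key1, hprobGE, Finset.mul_sum]
      calc ∑ c ∈ Finset.univ.filter
            (fun c : Fin n → Bool => k ≤ (Finset.univ.filter (fun i => c i = true)).card),
            (((k - r2 : ℕ).choose 2 : ℕ) : ℝ) * θ c
          ≤ ∑ c ∈ Finset.univ.filter
            (fun c : Fin n → Bool => k ≤ (Finset.univ.filter (fun i => c i = true)).card),
            (((A.filter (fun i => c i = true)).card.choose 2 : ℕ) : ℝ) * θ c := by
            refine Finset.sum_le_sum fun c hc => ?_
            refine mul_le_mul_of_nonneg_right ?_ (hθ0 c)
            have := hkey r2 (by omega) c (Finset.mem_filter.mp hc).2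
            exact_mod_cast Nat.choose_le_choose 2 this
        _ ≤ ∑ c : Fin n → Bool,
            (((A.filter (fun i => c i = true)).card.choose 2 : ℕ) : ℝ) * θ c := by
            refine Finset.sum_le_sum_of_subset_of_nonneg (Finset.filter_subset _ _)
              fun c _ _ => ?_
            exact mul_nonneg (by positivity) (hθ0 c)
    have hcast : (((k - r2 : ℕ).choose 2 : ℕ) : ℝ)
        = ((k : ℝ) - r2) * ((k : ℝ) - r2 - 1) / 2 := by
      rw [Nat.cast_choose_two, Nat.cast_sub (by omega)]
    have hc : (0 : ℝ) < ((k : ℝ) - r2) * ((k : ℝ) - r2 - 1) / 2 := by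
      have : (r2 : ℝ) + 2 ≤ k := by exact_mod_cast hr2k
      nlinarith
    rw [le_div_iff₀ hc, mul_comm, ← hcast]
    exact key2
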